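/- For every integer n ≥ 1, let L_n = {0, a₁, …, a_n, 1} be the lattice where 0 is bottom, 1 is top, and a₁, …, a_n are pairwise incomparable. Then K = {0, a₁} is a downward-closed sub-lattice of L_n, the quotient {y ∈ L_n | y ≥ a₁} is isomorphic to the two-element lattice 𝔹, and for n ≠ m the lattices L_n and L_m are not isomorphic. Consequently there are infinitely many pairwise non-isomorphic finite lattices L fitting in a short exact sequence 𝔹 → L → 𝔹. -/
import Mathlib


/-- A bundled complete lattice. -/
structure BLat : Type 1 where
  carrier : Type
  [lat : CompleteLattice carrier]

attribute [instance] BLat.lat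

/-- `L` is the lattice `L_n = {0, a₁, …, a_n, 1}` with bottom `0 = ⊥`, top `1 = ⊤`
and the `a i` pairwise incomparable strictly between `⊥` and `⊤`. -/
def IsLn (n : ℕ) (L : Type) [CompleteLattice L] (a : Fin n → L) : Prop :=
  Function.Injective a ∧
  (∀ i, ⊥ < a i ∧ a i < ⊤) ∧
  (∀ i j, i ≠ j → ¬ a i ≤ a j) ∧
  (∀ x : L, x = ⊥ ∨ x = ⊤ ∨ ∃ i, x = a i) ∧
  (⊥ : L) ≠ ⊤


/-- The family of subsets of `Fin (n+2)`: empty, universe, and singletons of castSucc. -/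
def LnT (n : ℕ) : Type :=
  {s : Set (Fin (n+2)) // s = ∅ ∨ s = Set.univ ∨ ∃ i : Fin (n+1), s = {Fin.castSucc i}}

noncomputable instance LnT.instCompleteLattice (n : ℕ) : CompleteLattice (LnT n) :=
  letI : PartialOrder (LnT n) := Subtype.partialOrder _
  letI : InfSet (LnT n) :=
    ⟨fun S => ⟨⋂ t ∈ S, (t : LnT n).1, by
      by_cases h0 : ∃ t ∈ S, (t : LnT n).1 = ∅
      · left
        obtain ⟨t, ht, he⟩ := h0
        exact Set.eq_empty_of_subset_empty
          (fun x hx => he ▸ Set.biInter_subset_of_mem (t := fun t : LnT n => t.1) ht hx)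
      · by_cases h1 : ∃ t ∈ S, ∃ i : Fin (n+1), (t : LnT n).1 = {Fin.castSucc i}
        · obtain ⟨t, ht, i, he⟩ := h1
          have hsub : (⋂ t ∈ S, (t : LnT n).1) ⊆ {Fin.castSucc i} := by
            exact fun x hx =>
              he ▸ Set.biInter_subset_of_mem (t := fun t : LnT n => t.1) ht hx
          rcases Set.subset_singleton_iff_eq.mp hsub with h | h
          · exact Or.inl h
          · exact Or.inr (Or.inr ⟨i, h⟩)
        · right; left
          apply Set.eq_univ_of_forall
          intro x
          refine Set.mem_biInter fun t ht => ?_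
          rcases t.2 with he | hu | hs
          · exact absurd ⟨t, ht, he⟩ h0
          · rw [hu]; trivial
          · exact absurd ⟨t, ht, hs⟩ h1⟩⟩
  completeLatticeOfInf _ (fun S =>
    ⟨fun t ht => Set.biInter_subset_of_mem (t := fun t : LnT n => t.1) ht,
     fun x hx => Set.subset_iInter₂ fun t ht => hx ht⟩)

lemma LnT.le_def {n : ℕ} {x y : LnT n} : x ≤ y ↔ x.1 ⊆ y.1 := Iff.rfl

def aLn (n : ℕ) (i : Fin (n+1)) : LnT n := ⟨{Fin.castSucc i}, Or.inr (Or.inr ⟨i, rfl⟩)⟩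

lemma botLn (n : ℕ) : (⊥ : LnT n) = ⟨∅, Or.inl rfl⟩ :=
  le_antisymm bot_le (LnT.le_def.mpr (Set.empty_subset _))

lemma topLn (n : ℕ) : (⊤ : LnT n) = ⟨Set.univ, Or.inr (Or.inl rfl)⟩ :=
  le_antisymm (LnT.le_def.mpr (Set.subset_univ _)) le_top

lemma isLn_LnT (n : ℕ) : IsLn (n+1) (LnT n) (aLn n) := by
  refine ⟨?_, ?_, ?_, ?_, ?_⟩
  · intro i j hij
    have : ({Fin.castSucc i} : Set (Fin (n+2))) = {Fin.castSucc j} := congrArg Subtype.val hij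
    exact Fin.castSucc_injective _ (Set.singleton_eq_singleton_iff.mp this)
  · intro i
    constructor
    · rw [botLn]
      refine lt_of_le_of_ne (LnT.le_def.mpr (Set.empty_subset _)) ?_
      intro h
      exact (Set.singleton_ne_empty (Fin.castSucc i)) (congrArg Subtype.val h).symm
    · rw [topLn]
      refine lt_of_le_of_ne (LnT.le_def.mpr (Set.subset_univ _)) ?_
      intro h
      have h' := congrArg Subtype.val h
      have hmem : Fin.last (n+1) ∈ ({Fin.castSucc i} : Set (Fin (n+2))) := by
        show Fin.last (n+1) ∈ (aLn n i).1
        rw [h']; trivial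
      exact (Fin.castSucc_lt_last i).ne' hmem
  · intro i j hij hle
    have : Fin.castSucc i = Fin.castSucc j := LnT.le_def.mp hle rfl
    exact hij (Fin.castSucc_injective _ this)
  · intro x
    rcases x.2 with he | hu | ⟨i, hs⟩
    · left; rw [botLn]; exact Subtype.ext he
    · right; left; rw [topLn]; exact Subtype.ext hu
    · right; right; exact ⟨i, Subtype.ext hs⟩
  · rw [botLn, topLn]
    intro h
    exact Set.empty_ne_univ (congrArg Subtype.val h)

lemma equiv_of_isLn {n : ℕ} {L : Type} [CompleteLattice L] {a : Fin (n+1) → L}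
    (h : IsLn (n+1) L a) : Nonempty ((Fin (n+1) ⊕ Bool) ≃ L) := by
  obtain ⟨hinj, hbt, _, hcls, hne⟩ := h
  refine ⟨Equiv.ofBijective (Sum.elim a (fun b => if b then ⊤ else ⊥)) ⟨?_, ?_⟩⟩
  · rintro (i | bi) (j | bj) hij <;> simp only [Sum.elim_inl, Sum.elim_inr] at hij
    · exact congrArg Sum.inl (hinj hij)
    · exfalso
      cases bj <;> simp at hij
      · exact (hbt i).1.ne' hij
      · exact (hbt i).2.ne hij
    · exfalso
      cases bi <;> simp at hij
      · exact (hbt j).1.ne hij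
      · exact (hbt j).2.ne' hij
    · cases bi <;> cases bj <;> simp_all
  · intro x
    rcases hcls x with rfl | rfl | ⟨i, rfl⟩
    · exact ⟨Sum.inr false, by simp⟩
    · exact ⟨Sum.inr true, by simp⟩
    · exact ⟨Sum.inl i, rfl⟩

/-- For every `n ≥ 1` the lattice `L_n = {0, a₁, …, a_n, 1}` (bottom, top and an
`n`-element antichain) exists; in it, `K = {⊥, a₁}` is a downward-closed sub-lattice
(closed under arbitrary joins), the quotient `{y | y ≥ a₁}` is order-isomorphic to the
two-element lattice `𝔹 = Bool`, and for `n ≠ m` the lattices `L_n` and `L_m` are not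
isomorphic. Hence there are infinitely many pairwise non-isomorphic finite lattices
fitting in a short exact sequence `𝔹 → L → 𝔹`. -/
theorem stmt18 :
    (∀ n : ℕ, ∃ X : BLat, ∃ a : Fin (n + 1) → X.carrier, IsLn (n + 1) X.carrier a) ∧
    (∀ (n : ℕ) (L : Type) [CompleteLattice L], ∀ (a : Fin (n + 1) → L),
      IsLn (n + 1) L a →
      (∀ x ∈ ({⊥, a 0} : Set L), ∀ y : L, y ≤ x → y ∈ ({⊥, a 0} : Set L)) ∧
      (∀ S : Set L, S ⊆ {⊥, a 0} → sSup S ∈ ({⊥, a 0} : Set L)) ∧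
      Nonempty ({y : L // a 0 ≤ y} ≃o Bool)) ∧
    (∀ (n m : ℕ) (L : Type) [CompleteLattice L] (L' : Type) [CompleteLattice L'],
      ∀ (a : Fin (n + 1) → L) (b : Fin (m + 1) → L'),
      IsLn (n + 1) L a → IsLn (m + 1) L' b → n ≠ m →
      IsEmpty (L ≃o L')) := by
  classical
  refine ⟨fun n => ⟨⟨LnT n⟩, aLn n, isLn_LnT n⟩, ?_, ?_⟩
  · intro n L _ a h
    obtain ⟨hinj, hbt, hinc, hcls, hne⟩ := h
    have ha0top : a 0 ≠ ⊤ := (hbt 0).2.ne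
    have mem_of_le : ∀ y : L, y ≤ a 0 → y ∈ ({⊥, a 0} : Set L) := by
      intro y hy
      rcases hcls y with rfl | rfl | ⟨i, rfl⟩
      · exact Set.mem_insert _ _
      · exact absurd (top_le_iff.mp hy) ha0top
      · by_cases hi : i = 0
        · subst hi; exact Set.mem_insert_iff.mpr (Or.inr rfl)
        · exact absurd hy (hinc i 0 hi)
    have key : ∀ y : L, a 0 ≤ y → y = a 0 ∨ y = ⊤ := by
      intro y hy
      rcases hcls y with rfl | rfl | ⟨i, rfl⟩
      · exact absurd (le_bot_iff.mp hy) (hbt 0).1.ne'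
      · exact Or.inr rfl
      · by_cases hi : (0 : Fin (n+1)) = i
        · subst hi; exact Or.inl rfl
        · exact absurd hy (hinc 0 i hi)
    refine ⟨?_, ?_, ?_⟩
    · intro x hx y hyx
      rcases Set.mem_insert_iff.mp hx with rfl | hx
      · exact Set.mem_insert_iff.mpr (Or.inl (le_bot_iff.mp hyx))
      · rw [Set.mem_singleton_iff] at hx
        subst hx
        exact mem_of_le y hyx
    · intro S hS
      refine mem_of_le _ (sSup_le fun x hx => ?_)
      rcases Set.mem_insert_iff.mp (hS hx) with rfl | hx
      · exact bot_le
      · rw [Set.mem_singleton_iff] at hx; exact hx.le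
    · refine ⟨{ toFun := fun y => decide (y.1 = ⊤),
                invFun := fun b => if b then ⟨⊤, le_top⟩ else ⟨a 0, le_rfl⟩,
                left_inv := ?_, right_inv := ?_, map_rel_iff' := ?_ }⟩
      · rintro ⟨y, hy⟩
        rcases key y hy with rfl | rfl
        · simp [ha0top]
        · simp
      · rintro (_ | _) <;> simp [ha0top]
      · rintro ⟨y₁, hy₁⟩ ⟨y₂, hy₂⟩
        rcases key y₁ hy₁ with rfl | rfl <;> rcases key y₂ hy₂ with rfl | rfl <;>
          simp [ha0top, Subtype.mk_le_mk, (hbt 0).2.le]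
  · intro n m L _ L' _ a b hL hL' hnm
    constructor
    intro e
    obtain ⟨eL⟩ := equiv_of_isLn hL
    obtain ⟨eL'⟩ := equiv_of_isLn hL'
    have hcard := Fintype.card_congr (eL.trans (e.toEquiv.trans eL'.symm))
    simp only [Fintype.card_sum, Fintype.card_fin, Fintype.card_bool] at hcard
    omega
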